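/- arXiv:1403.2647 — 2 statements merged into one kernel-verified Lean document; each statement's English description precedes it below -/
import Mathlib

section
/- Let I be a nonempty index set, let (X_i)_{i∈I} be any family of real Banach spaces and let X be the c0-sum of (X_i)_{i∈I}. Then R(X) = sup_{i∈I} R(X_i). -/
open Filter Topology MeasureTheory
open scoped ENNReal ZeroAtInfty

noncomputable section

/-- A sequence in a Banach space is weakly null if `φ (x n) → 0` for every
continuous linear functional `φ`. -/
def WeaklyNull {X : Type*} [NormedAddCommGroup X] [NormedSpace ℝ X] (u : ℕ → X) : Prop :=
  ∀ φ : X →L[ℝ] ℝ, Tendsto (fun n => φ (u n)) atTop (𝓝 0)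

/-- The Schur property: every weakly null sequence converges to `0` in norm. -/
def SchurProperty (X : Type*) [NormedAddCommGroup X] [NormedSpace ℝ X] : Prop :=
  ∀ u : ℕ → X, WeaklyNull u → Tendsto (fun n => ‖u n‖) atTop (𝓝 0)

/-- The Opial modulus `r_X(c)`. -/
def opialModulus (X : Type*) [NormedAddCommGroup X] [NormedSpace ℝ X] (c : ℝ) : ℝ :=
  sInf { d : ℝ | ∃ (x : X) (u : ℕ → X), c ≤ ‖x‖ ∧ WeaklyNull u ∧
    1 ≤ liminf (fun n => ‖u n‖) atTop ∧
    d = liminf (fun n => ‖u n - x‖) atTop - 1 }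

/-- The modulus `η_X(ε, R)`. -/
def etaModulus (X : Type*) [NormedAddCommGroup X] [NormedSpace ℝ X] (ε R : ℝ) : ℝ :=
  sInf { d : ℝ | ∃ (x : X) (u : ℕ → X), ε ≤ ‖x‖ ∧ WeaklyNull u ∧
    limsup (fun n => ‖u n‖) atTop ≤ R ∧
    d = liminf (fun n => ‖u n - x‖) atTop - liminf (fun n => ‖u n‖) atTop }

/-- The García-Falset coefficient `R(X)`. -/
def garciaFalset (X : Type*) [NormedAddCommGroup X] [NormedSpace ℝ X] : ℝ :=
  sSup { a : ℝ | ∃ (x : X) (u : ℕ → X), ‖x‖ ≤ 1 ∧ (∀ n, ‖u n‖ ≤ 1) ∧ WeaklyNull u ∧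
    a = liminf (fun n => ‖u n + x‖) atTop }

/-- The degree of WORTHness `w(X)`. -/
def worthDegree (X : Type*) [NormedAddCommGroup X] [NormedSpace ℝ X] : ℝ :=
  sSup { r : ℝ | 0 ≤ r ∧ ∀ (x : X) (u : ℕ → X), WeaklyNull u →
    r * liminf (fun n => ‖u n + x‖) atTop ≤ liminf (fun n => ‖u n - x‖) atTop }

/-- Gao's modulus of u-convexity `u_X(ε)`. -/
def uModulus (X : Type*) [NormedAddCommGroup X] [NormedSpace ℝ X] (ε : ℝ) : ℝ :=
  sInf { d : ℝ | ∃ (x y : X) (φ : X →L[ℝ] ℝ), ‖x‖ = 1 ∧ ‖y‖ = 1 ∧ ‖φ‖ = 1 ∧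
    φ x = 1 ∧ φ y ≤ 1 - ε ∧ d = 1 - ‖(2⁻¹ : ℝ) • (x + y)‖ }

/-- The c₀-sum of a family of Banach spaces: the closure, inside the ℓ∞-sum, of the
set of finitely supported families. -/
def c0Sum {I : Type*} (X : I → Type*) [∀ i, NormedAddCommGroup (X i)]
    [∀ i, NormedSpace ℝ (X i)] : Submodule ℝ (lp X ∞) :=
  (Submodule.span ℝ { f : lp X ∞ | Set.Finite { i | (f : ∀ i, X i) i ≠ 0 } }).topologicalClosure

end

section GFHelpers

open Filter Topology

noncomputable section

variable {Y Z : Type*} [NormedAddCommGroup Y] [NormedSpace ℝ Y]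
  [NormedAddCommGroup Z] [NormedSpace ℝ Z]

/-- The defining set of the García-Falset coefficient. -/
def gfSet (Y : Type*) [NormedAddCommGroup Y] [NormedSpace ℝ Y] : Set ℝ :=
  { a : ℝ | ∃ (x : Y) (u : ℕ → Y), ‖x‖ ≤ 1 ∧ (∀ n, ‖u n‖ ≤ 1) ∧ WeaklyNull u ∧
    a = liminf (fun n => ‖u n + x‖) atTop }

lemma garciaFalset_eq_sSup : garciaFalset Y = sSup (gfSet Y) := rfl

lemma weaklyNull_zero : WeaklyNull (0 : ℕ → Y) := fun φ => by
  simpa using (tendsto_const_nhds : Tendsto (fun _ : ℕ => (0 : ℝ)) atTop (𝓝 0))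

lemma zero_mem_gfSet : (0 : ℝ) ∈ gfSet Y := by
  refine ⟨0, 0, by simp, by simp, weaklyNull_zero, ?_⟩
  simp [liminf_const]

lemma gfSet_subset_Icc : gfSet Y ⊆ Set.Icc 0 2 := by
  rintro a ⟨x, u, hx, hu, -, rfl⟩
  have hb : ∀ n, ‖u n + x‖ ≤ 2 := fun n => (norm_add_le _ _).trans (by linarith [hu n])
  constructor
  · refine le_liminf_of_le ?_ (Eventually.of_forall fun n => norm_nonneg _)
    exact (isBoundedUnder_of ⟨2, hb⟩).isCoboundedUnder_ge
  · exact liminf_le_of_frequently_le (Eventually.of_forall hb).frequently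
      (isBoundedUnder_of ⟨0, fun n => norm_nonneg _⟩)

lemma bddAbove_gfSet : BddAbove (gfSet Y) :=
  ⟨2, fun _ ha => (gfSet_subset_Icc ha).2⟩

lemma garciaFalset_nonneg : 0 ≤ garciaFalset Y :=
  le_csSup bddAbove_gfSet zero_mem_gfSet

lemma garciaFalset_le_two : garciaFalset Y ≤ 2 :=
  Real.sSup_le (fun _ ha => (gfSet_subset_Icc ha).2) (by norm_num)

lemma garciaFalset_le_of_linearIsometry (e : Y →ₗᵢ[ℝ] Z) :
    garciaFalset Y ≤ garciaFalset Z := by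
  refine csSup_le_csSup bddAbove_gfSet ⟨0, zero_mem_gfSet⟩ ?_
  rintro a ⟨x, u, hx, hu, hw, rfl⟩
  refine ⟨e x, fun n => e (u n), by rwa [e.norm_map], fun n => by rw [e.norm_map]; exact hu n,
    ?_, ?_⟩
  · intro φ
    exact hw (φ.comp e.toContinuousLinearMap)
  · congr 1
    funext n
    rw [← e.map_add, e.norm_map]

variable {I : Type*} (X : I → Type*) [∀ i, NormedAddCommGroup (X i)] [∀ i, NormedSpace ℝ (X i)]

/-- Evaluation at a coordinate as a continuous linear map on `lp X ∞`. -/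
def lpEvalCLM (i : I) : lp X ∞ →L[ℝ] X i :=
  LinearMap.mkContinuous
    { toFun := fun f => f i
      map_add' := fun f g => congrFun (lp.coeFn_add f g) i
      map_smul' := fun c f => congrFun (lp.coeFn_smul c f) i }
    1 (fun f => by simpa using lp.norm_apply_le_norm ENNReal.top_ne_zero f i)

/-- Evaluation at a coordinate as a continuous linear map on the c₀-sum. -/
def c0EvalCLM (i : I) : c0Sum X →L[ℝ] X i :=
  (lpEvalCLM X i).comp (c0Sum X).subtypeL

section Single

variable [DecidableEq I]

lemma single_mem_c0Sum (i : I) (x : X i) : lp.single ∞ i x ∈ c0Sum X := by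
  apply Submodule.le_topologicalClosure
  apply Submodule.subset_span
  refine (Set.finite_singleton i).subset fun j hj => ?_
  by_contra h
  exact hj (lp.single_apply_ne ∞ i x h)

lemma norm_lp_single_top (i : I) (x : X i) : ‖lp.single ∞ i x‖ = ‖x‖ := by
  refine le_antisymm (lp.norm_le_of_forall_le (norm_nonneg x) fun j => ?_) ?_
  · rcases eq_or_ne j i with rfl | h
    · rw [lp.single_apply_self]
    · rw [lp.single_apply_ne ∞ i x h]
      simp
  · simpa [lp.single_apply_self] using
      lp.norm_apply_le_norm ENNReal.top_ne_zero (lp.single ∞ i x) i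

lemma lp_single_add (i : I) (x y : X i) :
    lp.single (E := X) ∞ i (x + y) = lp.single ∞ i x + lp.single ∞ i y := by
  refine lp.ext (funext fun j => ?_)
  rw [lp.coeFn_add, Pi.add_apply]
  rcases eq_or_ne j i with rfl | h
  · simp [lp.single_apply_self]
  · simp [lp.single_apply_ne ∞ i _ h]

/-- The inclusion of `X i` into the c₀-sum as a linear isometry. -/
def c0SumSingle (i : I) : X i →ₗᵢ[ℝ] c0Sum X where
  toLinearMap :=
    { toFun := fun x => ⟨lp.single ∞ i x, single_mem_c0Sum X i x⟩
      map_add' := fun x y => Subtype.ext (lp_single_add X i x y)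
      map_smul' := fun c x => Subtype.ext (lp.single_smul ∞ i c x) }
  norm_map' := fun x => by
    simpa [Submodule.coe_norm] using norm_lp_single_top X i x

end Single

lemma finite_support_of_mem_span (f : lp X ∞)
    (hf : f ∈ Submodule.span ℝ { f : lp X ∞ | Set.Finite { i | (f : ∀ i, X i) i ≠ 0 } }) :
    Set.Finite { i | (f : ∀ i, X i) i ≠ 0 } := by
  induction hf using Submodule.span_induction with
  | mem g hg => exact hg
  | zero => simp [lp.coeFn_zero]
  | add g h _ _ hg hh =>
    refine (hg.union hh).subset fun i hi => ?_
    simp only [Set.mem_union, Set.mem_setOf_eq]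
    by_contra hc
    push_neg at hc
    apply hi
    rw [lp.coeFn_add, Pi.add_apply, hc.1, hc.2, add_zero]
  | smul c g _ hg =>
    refine hg.subset fun i hi => ?_
    simp only [Set.mem_setOf_eq] at hi ⊢
    intro h0
    exact hi (by rw [lp.coeFn_smul, Pi.smul_apply, h0, smul_zero])

lemma exists_common_subseq (F : Finset I) (a : I → ℕ → ℝ)
    (hb : ∀ i n, a i n ∈ Set.Icc (0 : ℝ) 2) :
    ∃ φ : ℕ → ℕ, StrictMono φ ∧ ∀ i ∈ F, ∃ L, Tendsto (fun k => a i (φ k)) atTop (𝓝 L) := by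
  classical
  induction F using Finset.induction with
  | empty => exact ⟨id, strictMono_id, by simp⟩
  | @insert j F hj ih =>
    obtain ⟨φ, hφ, hF⟩ := ih
    obtain ⟨L, -, ψ, hψ, hL⟩ := tendsto_subseq_of_bounded (Metric.isBounded_Icc (0 : ℝ) 2)
      (fun k => hb j (φ k))
    refine ⟨φ ∘ ψ, hφ.comp hψ, fun i hi => ?_⟩
    rcases Finset.mem_insert.mp hi with rfl | hi
    · exact ⟨L, hL⟩
    · obtain ⟨L', hL'⟩ := hF i hi
      exact ⟨L', hL'.comp hψ.tendsto_atTop⟩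

end

end GFHelpers

/-- The García-Falset coefficient of the c₀-sum of a nonempty family of Banach spaces equals
the supremum of the García-Falset coefficients of the summands. -/
theorem statement8 {I : Type*} [Nonempty I] (X : I → Type*) [∀ i, NormedAddCommGroup (X i)]
    [∀ i, NormedSpace ℝ (X i)] [∀ i, CompleteSpace (X i)] :
    garciaFalset (c0Sum X) = ⨆ i, garciaFalset (X i) := by
  classical
  have hbddR : BddAbove (Set.range fun i => garciaFalset (X i)) :=
    ⟨2, by rintro - ⟨i, rfl⟩; exact garciaFalset_le_two⟩
  set S := ⨆ i, garciaFalset (X i) with hSdef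
  have hS0 : 0 ≤ S :=
    le_trans garciaFalset_nonneg (le_ciSup hbddR (Classical.arbitrary I))
  refine le_antisymm ?_ (ciSup_le fun i => garciaFalset_le_of_linearIsometry (c0SumSingle X i))
  rw [garciaFalset_eq_sSup]
  refine Real.sSup_le ?_ hS0
  rintro a ⟨x, u, hx, hu, hw, rfl⟩
  have hb2 : ∀ n, ‖u n + x‖ ≤ 2 := fun n => (norm_add_le _ _).trans (by linarith [hu n, hx])
  by_cases htriv : ∀ i, ∀ y : X i, y = 0
  · have hz : ∀ z : c0Sum X, z = 0 := by
      intro z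
      have h0 : ‖z‖ ≤ 0 := by
        rw [Submodule.coe_norm]
        exact lp.norm_le_of_forall_le le_rfl fun i => by
          rw [htriv _ ((z : lp X ∞) i), norm_zero]
      exact norm_le_zero_iff.mp h0
    have heq : (fun n => ‖u n + x‖) = fun _ => (0 : ℝ) :=
      funext fun n => by rw [hz (u n + x), norm_zero]
    rw [heq, liminf_const]
    exact hS0
  · push_neg at htriv
    obtain ⟨i₀, y₀, hy₀⟩ := htriv
    have hny₀ : ‖(‖y₀‖⁻¹ • y₀ : X i₀)‖ = 1 := by
      rw [norm_smul, norm_inv, norm_norm, inv_mul_cancel₀ (norm_ne_zero_iff.mpr hy₀)]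
    have hS1 : (1 : ℝ) ≤ S := by
      have h1 : (1 : ℝ) ∈ gfSet (X i₀) := by
        refine ⟨‖y₀‖⁻¹ • y₀, 0, le_of_eq hny₀, fun n => by simp, weaklyNull_zero, ?_⟩
        simp only [Pi.zero_apply, zero_add]
        rw [liminf_const, hny₀]
      calc (1 : ℝ) ≤ garciaFalset (X i₀) := le_csSup bddAbove_gfSet h1
        _ ≤ S := le_ciSup hbddR i₀
    have key : ∀ ε : ℝ, 0 < ε → liminf (fun n => ‖u n + x‖) atTop ≤ S + ε := by
      intro ε hε
      have hxc : (x : lp X ∞) ∈ closure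
          ((Submodule.span ℝ { f : lp X ∞ | Set.Finite { i | (f : ∀ i, X i) i ≠ 0 } } :
            Submodule ℝ (lp X ∞)) : Set (lp X ∞)) := x.2
      obtain ⟨g, hg_mem, hg_dist⟩ := Metric.mem_closure_iff.mp hxc ε hε
      set F : Finset I := (finite_support_of_mem_span X g hg_mem).toFinset with hF
      have hout : ∀ i ∉ F, ‖(x : lp X ∞) i‖ ≤ ε := by
        intro i hi
        have hgi : (g : ∀ i, X i) i = 0 := by
          by_contra h
          exact hi ((finite_support_of_mem_span X g hg_mem).mem_toFinset.mpr h)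
        have h1 : ‖(x : lp X ∞) i - g i‖ ≤ ‖(x : lp X ∞) - g‖ := by
          have h2 := lp.norm_apply_le_norm ENNReal.top_ne_zero ((x : lp X ∞) - g) i
          rwa [lp.coeFn_sub, Pi.sub_apply] at h2
        rw [hgi, sub_zero] at h1
        exact h1.trans (by rw [← dist_eq_norm]; exact le_of_lt hg_dist)
      set aseq : I → ℕ → ℝ := fun i n => ‖(u n : lp X ∞) i + (x : lp X ∞) i‖ with haseq
      have hcoord : ∀ (z : c0Sum X) (i : I), ‖(z : lp X ∞) i‖ ≤ ‖z‖ := fun z i => by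
        rw [Submodule.coe_norm]
        exact lp.norm_apply_le_norm ENNReal.top_ne_zero _ i
      have hbnd : ∀ i n, aseq i n ∈ Set.Icc (0 : ℝ) 2 := by
        intro i n
        refine ⟨norm_nonneg _, ?_⟩
        calc aseq i n ≤ ‖(u n : lp X ∞) i‖ + ‖(x : lp X ∞) i‖ := norm_add_le _ _
          _ ≤ ‖u n‖ + ‖x‖ := add_le_add (hcoord _ i) (hcoord _ i)
          _ ≤ 2 := by linarith [hu n, hx]
      obtain ⟨φ, hφ, hconv⟩ := exists_common_subseq F aseq hbnd
      have hLle : ∀ i ∈ F, ∃ L, Tendsto (fun k => aseq i (φ k)) atTop (𝓝 L) ∧ L ≤ S := by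
        intro i hi
        obtain ⟨L, hL⟩ := hconv i hi
        refine ⟨L, hL, ?_⟩
        have hmem : L ∈ gfSet (X i) := by
          refine ⟨(x : lp X ∞) i, fun k => (u (φ k) : lp X ∞) i,
            (hcoord x i).trans hx, fun k => (hcoord _ i).trans (hu _), ?_, (hL.liminf_eq).symm⟩
          intro ψ
          exact (hw (ψ.comp (c0EvalCLM X i))).comp hφ.tendsto_atTop
        calc L ≤ garciaFalset (X i) := le_csSup bddAbove_gfSet hmem
          _ ≤ S := le_ciSup hbddR i
      have hev : ∀ᶠ k in atTop, ‖u (φ k) + x‖ ≤ S + ε := by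
        have hallF : ∀ᶠ k in atTop, ∀ i ∈ F, aseq i (φ k) ≤ S + ε := by
          rw [eventually_all_finset]
          intro i hi
          obtain ⟨L, hL, hLS⟩ := hLle i hi
          exact hL.eventually_le_const (by linarith)
        filter_upwards [hallF] with k hk
        rw [Submodule.coe_norm]
        refine lp.norm_le_of_forall_le (by linarith) fun i => ?_
        have hcoe : ((u (φ k) + x : c0Sum X) : lp X ∞) i
            = (u (φ k) : lp X ∞) i + (x : lp X ∞) i := by
          rw [Submodule.coe_add, lp.coeFn_add, Pi.add_apply]
        rw [hcoe]
        by_cases hiF : i ∈ F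
        · exact hk i hiF
        · calc ‖(u (φ k) : lp X ∞) i + (x : lp X ∞) i‖
              ≤ ‖(u (φ k) : lp X ∞) i‖ + ‖(x : lp X ∞) i‖ := norm_add_le _ _
            _ ≤ 1 + ε := add_le_add ((hcoord _ i).trans (hu _)) (hout i hiF)
            _ ≤ S + ε := by linarith
      haveI : (Filter.map φ atTop).NeBot := Filter.map_neBot
      have h1 : liminf (fun n => ‖u n + x‖) atTop
          ≤ liminf (fun k => ‖u (φ k) + x‖) atTop := by
        rw [show (fun k => ‖u (φ k) + x‖) = (fun n => ‖u n + x‖) ∘ φ from rfl, liminf_comp]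
        refine liminf_le_liminf_of_le hφ.tendsto_atTop
          (isBoundedUnder_of ⟨0, fun n => norm_nonneg _⟩)
          ((isBoundedUnder_of ⟨2, fun n => hb2 n⟩).isCoboundedUnder_ge)
      have h2 : liminf (fun k => ‖u (φ k) + x‖) atTop ≤ S + ε :=
        liminf_le_of_frequently_le hev.frequently
          (isBoundedUnder_of ⟨0, fun k => norm_nonneg _⟩)
      linarith
    by_contra hcon
    push_neg at hcon
    have := key ((liminf (fun n => ‖u n + x‖) atTop - S) / 2) (by linarith)
    linarith
end

section
/- Let N be an absolute, normalised norm on ℝ^m and let X_1, …, X_m be real Banach spaces each having the nonstrict Opial property. Then the E-sum [⊕_{i=1}^m X_i]_E has the nonstrict Opial property; explicitly, whenever for each i = 1,…,m the sequence (x_{n,i})_{n∈ℕ} is weakly null in X_i and y_i ∈ X_i, then limsup_n N(‖x_{n,1}‖, …, ‖x_{n,m}‖) ≤ limsup_n N(‖x_{n,1} − y_1‖, …, ‖x_{n,m} − y_m‖). -/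
open Filter Topology MeasureTheory
open scoped ENNReal ZeroAtInfty

theorem weaklyNull_bounded {X : Type*} [NormedAddCommGroup X] [NormedSpace ℝ X]
    [CompleteSpace X] (u : ℕ → X) (h : WeaklyNull u) : ∃ C, ∀ n, ‖u n‖ ≤ C := by
  obtain ⟨C, hC⟩ := banach_steinhaus
    (g := fun n => NormedSpace.inclusionInDoubleDual ℝ X (u n)) (fun φ => by
      obtain ⟨C, hC⟩ := (h φ).norm.bddAbove_range
      exact ⟨C, fun n => by
        simpa [NormedSpace.dual_def] using hC (Set.mem_range_self n)⟩)
  refine ⟨C, fun n => ?_⟩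
  have he : ‖NormedSpace.inclusionInDoubleDual ℝ X (u n)‖ = ‖u n‖ :=
    (NormedSpace.inclusionInDoubleDualLi ℝ (E := X)).norm_map (u n)
  rw [← he]; exact hC n

section AbsNorm
variable {m : ℕ} {N : (Fin m → ℝ) → ℝ}

theorem absN_zero (hhom : ∀ (c : ℝ) (a : Fin m → ℝ), N (c • a) = |c| * N a) :
    N 0 = 0 := by
  have := hhom 0 0; simpa using this

theorem absN_sum_le (hadd : ∀ a b : Fin m → ℝ, N (a + b) ≤ N a + N b)
    (hhom : ∀ (c : ℝ) (a : Fin m → ℝ), N (c • a) = |c| * N a)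
    (hnorm : ∀ i, N (Pi.single i 1) = 1) (v : Fin m → ℝ) : N v ≤ ∑ i, |v i| := by
  calc N v = N (∑ i, (v i) • (Pi.single i 1 : Fin m → ℝ)) := by
        congr 1; funext j
        simp [Finset.sum_apply, Pi.single_apply, Finset.sum_ite_eq', mul_comm]
    _ ≤ ∑ i, N ((v i) • (Pi.single i 1 : Fin m → ℝ)) :=
        Finset.le_sum_of_subadditive N (absN_zero hhom).le hadd _ _
    _ = ∑ i, |v i| := by
        refine Finset.sum_congr rfl fun i _ => ?_
        rw [hhom, hnorm, mul_one]

theorem absN_abs_sub (hadd : ∀ a b : Fin m → ℝ, N (a + b) ≤ N a + N b)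
    (hhom : ∀ (c : ℝ) (a : Fin m → ℝ), N (c • a) = |c| * N a)
    (a b : Fin m → ℝ) : |N a - N b| ≤ N (a - b) := by
  have hneg : ∀ c : Fin m → ℝ, N (-c) = N c := by
    intro c
    have := hhom (-1) c; simpa using this
  rw [abs_sub_le_iff]
  constructor
  · have := hadd (a - b) b; simpa using this
  · have := hadd (b - a) a
    have h2 : N (b - a) = N (a - b) := by rw [← hneg (a - b)]; congr 1; abel
    simp only [sub_add_cancel] at this
    linarith

theorem absN_cont (hadd : ∀ a b : Fin m → ℝ, N (a + b) ≤ N a + N b)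
    (hhom : ∀ (c : ℝ) (a : Fin m → ℝ), N (c • a) = |c| * N a)
    (hnorm : ∀ i, N (Pi.single i 1) = 1) : Continuous N := by
  refine (LipschitzWith.of_dist_le_mul (K := m) fun a b => ?_).continuous
  rw [Real.dist_eq]
  calc |N a - N b| ≤ N (a - b) := absN_abs_sub hadd hhom a b
    _ ≤ ∑ i, |(a - b) i| := absN_sum_le hadd hhom hnorm _
    _ ≤ ∑ _i : Fin m, dist a b := by
        refine Finset.sum_le_sum fun i _ => ?_
        have := norm_le_pi_norm (a - b) i
        simpa [Real.norm_eq_abs, dist_eq_norm] using this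
    _ = (m : ℝ) * dist a b := by simp [mul_comm]

theorem absN_update_le (hadd : ∀ a b : Fin m → ℝ, N (a + b) ≤ N a + N b)
    (hhom : ∀ (c : ℝ) (a : Fin m → ℝ), N (c • a) = |c| * N a)
    (habs : ∀ a b : Fin m → ℝ, (∀ i, |a i| = |b i|) → N a = N b)
    (c : Fin m → ℝ) (j : Fin m) (t : ℝ) (h0 : 0 ≤ c j) (hle : c j ≤ t) :
    N c ≤ N (Function.update c j t) := by
  rcases eq_or_lt_of_le (h0.trans hle) with ht | ht
  · have : c j = t := le_antisymm hle (by rw [← ht]; exact h0)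
    rw [← this, Function.update_eq_self]
  · set u := Function.update c j t with hu
    set w := Function.update c j (-t) with hw
    have hNw : N w = N u := by
      refine habs w u fun i => ?_
      by_cases hij : i = j
      · subst hij; simp [hu, hw]
      · simp [hu, hw, Function.update_of_ne hij]
    set l := (t + c j) / (2 * t) with hl
    set μ := (t - c j) / (2 * t) with hμ
    have hl0 : 0 ≤ l := by positivity
    have hμ0 : 0 ≤ μ := by
      apply div_nonneg (by linarith) (by linarith)
    have hlμ : l + μ = 1 := by
      rw [hl, hμ, ← add_div, div_eq_one_iff_eq (by positivity)]; ring
    have hc : c = l • u + μ • w := by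
      funext i
      by_cases hij : i = j
      · subst hij
        simp only [Pi.add_apply, Pi.smul_apply, smul_eq_mul, hu, hw,
          Function.update_self]
        rw [hl, hμ, div_mul_eq_mul_div, div_mul_eq_mul_div, ← add_div,
          eq_div_iff (by positivity)]; ring
      · simp only [Pi.add_apply, Pi.smul_apply, smul_eq_mul, hu, hw,
          Function.update_of_ne hij]
        have h : l * c i + μ * c i = (l + μ) * c i := by ring
        rw [h, hlμ, one_mul]
    calc N c = N (l • u + μ • w) := by rw [← hc]
      _ ≤ N (l • u) + N (μ • w) := hadd _ _
      _ = l * N u + μ * N w := by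
          rw [hhom, hhom, abs_of_nonneg hl0, abs_of_nonneg hμ0]
      _ = N u := by
          rw [hNw]
          have h : l * N u + μ * N u = (l + μ) * N u := by ring
          rw [h, hlμ, one_mul]

theorem absN_mono (hadd : ∀ a b : Fin m → ℝ, N (a + b) ≤ N a + N b)
    (hhom : ∀ (c : ℝ) (a : Fin m → ℝ), N (c • a) = |c| * N a)
    (habs : ∀ a b : Fin m → ℝ, (∀ i, |a i| = |b i|) → N a = N b)
    (a b : Fin m → ℝ) (h0 : ∀ i, 0 ≤ a i) (hle : ∀ i, a i ≤ b i) :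
    N a ≤ N b := by
  classical
  have key : ∀ s : Finset (Fin m), N a ≤ N (s.piecewise b a) := by
    intro s
    induction s using Finset.induction with
    | empty => simp
    | @insert j s hj ih =>
      rw [Finset.piecewise_insert]
      refine ih.trans (absN_update_le hadd hhom habs _ j (b j) ?_ ?_)
      · rw [Finset.piecewise_eq_of_notMem _ _ _ hj]; exact h0 j
      · rw [Finset.piecewise_eq_of_notMem _ _ _ hj]; exact hle j
  have := key Finset.univ
  simpa using this

end AbsNorm

/-- If `N` is an absolute normalised norm on `ℝ^m` and `X 1, …, X m` are Banach spaces with the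
nonstrict Opial property, then the `E`-sum has the nonstrict Opial property, stated explicitly
in terms of `N` and componentwise weakly null sequences. -/
theorem statement10 (m : ℕ) (N : (Fin m → ℝ) → ℝ)
    (hadd : ∀ a b : Fin m → ℝ, N (a + b) ≤ N a + N b)
    (hhom : ∀ (c : ℝ) (a : Fin m → ℝ), N (c • a) = |c| * N a)
    (hdef : ∀ a : Fin m → ℝ, N a = 0 → a = 0)
    (habs : ∀ a b : Fin m → ℝ, (∀ i, |a i| = |b i|) → N a = N b)
    (hnormalised : ∀ i, N (Pi.single i 1) = 1)
    (X : Fin m → Type*) [∀ i, NormedAddCommGroup (X i)] [∀ i, NormedSpace ℝ (X i)]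
    [∀ i, CompleteSpace (X i)]
    (hOp : ∀ i, ∀ u : ℕ → X i, WeaklyNull u → ∀ z : X i,
      limsup (fun n => ‖u n‖) atTop ≤ limsup (fun n => ‖u n - z‖) atTop)
    (x : ∀ i, ℕ → X i) (hx : ∀ i, WeaklyNull (x i)) (y : ∀ i, X i) :
    limsup (fun n => N fun i => ‖x i n‖) atTop ≤
      limsup (fun n => N fun i => ‖x i n - y i‖) atTop := by
  
  classical
  have hcont : Continuous N := absN_cont hadd hhom hnormalised
  have hN0 : ∀ v : Fin m → ℝ, 0 ≤ N v := by
    intro v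
    have hneg : N (-v) = N v := by
      have := hhom (-1) v; simpa using this
    have h1 : N (v + (-v)) ≤ N v + N (-v) := hadd v (-v)
    have h2 : N (0 : Fin m → ℝ) = 0 := absN_zero hhom
    simp only [add_neg_cancel, h2, hneg] at h1
    linarith
  set g0 : ℕ → ℝ := fun n => N fun i => ‖x i n‖ with hg0def
  set g1 : ℕ → ℝ := fun n => N fun i => ‖x i n - y i‖ with hg1def
  choose C hC using fun i => weaklyNull_bounded (x i) (hx i)
  have hCnn : ∀ i, 0 ≤ C i := fun i => (norm_nonneg _).trans (hC i 0)
  set R : ℝ := ∑ i, (C i + ‖y i‖ + 1) with hRdef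
  have hRi : ∀ i : Fin m, C i + ‖y i‖ + 1 ≤ R := fun i =>
    Finset.single_le_sum (f := fun i => C i + ‖y i‖ + 1)
      (fun j _ => by have := hCnn j; have := norm_nonneg (y j); linarith) (Finset.mem_univ i)
  have hR0 : 0 ≤ R := Finset.sum_nonneg fun i _ => by
    have := hCnn i; have := norm_nonneg (y i); linarith
  have hxR : ∀ i n, ‖x i n‖ ≤ R := fun i n =>
    (hC i n).trans (by have := hRi i; have := norm_nonneg (y i); linarith)
  have hxyR : ∀ i n, ‖x i n - y i‖ ≤ R := fun i n =>
    (norm_sub_le _ _).trans (by have := hRi i; linarith [hC i n])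
  have hg0bdd : ∀ n, g0 n ≤ (m : ℝ) * R := by
    intro n
    calc g0 n ≤ ∑ i, |‖x i n‖| := absN_sum_le hadd hhom hnormalised _
      _ ≤ ∑ _i : Fin m, R := Finset.sum_le_sum fun i _ => by
          rw [abs_of_nonneg (norm_nonneg _)]; exact hxR i n
      _ = (m : ℝ) * R := by simp [mul_comm]
  have hg1bdd : ∀ n, g1 n ≤ (m : ℝ) * R := by
    intro n
    calc g1 n ≤ ∑ i, |‖x i n - y i‖| := absN_sum_le hadd hhom hnormalised _
      _ ≤ ∑ _i : Fin m, R := Finset.sum_le_sum fun i _ => by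
          rw [abs_of_nonneg (norm_nonneg _)]; exact hxyR i n
      _ = (m : ℝ) * R := by simp [mul_comm]
  set L : ℝ := limsup g0 atTop with hLdef
  -- step 1: frequently close to limsup
  have hfreq : ∀ k : ℕ, ∃ᶠ n in atTop, L - 1 / (k + 1) < g0 n := by
    intro k
    refine frequently_lt_of_lt_limsup ?_ ?_
    · exact isCoboundedUnder_le_of_le atTop fun n => hN0 _
    · have : (0:ℝ) < 1 / (k + 1) := by positivity
      linarith
  obtain ⟨φ₁, hφ₁mono, hφ₁⟩ := extraction_forall_of_frequently hfreq
  -- step 2: Bolzano–Weierstrass on the component norms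
  set F : ℕ → (Fin m → ℝ × ℝ) := fun n i => (‖x i n‖, ‖x i n - y i‖) with hFdef
  have hFmem : ∀ k, F (φ₁ k) ∈ Metric.closedBall (0 : Fin m → ℝ × ℝ) R := by
    intro k
    rw [Metric.mem_closedBall, dist_zero_right]
    refine pi_norm_le_iff_of_nonneg hR0 |>.2 fun i => ?_
    rw [Prod.norm_def]
    refine max_le ?_ ?_
    · simpa [hFdef, Real.norm_eq_abs, abs_of_nonneg (norm_nonneg _)] using hxR i (φ₁ k)
    · simpa [hFdef, Real.norm_eq_abs, abs_of_nonneg (norm_nonneg _)] using hxyR i (φ₁ k)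
  obtain ⟨c, -, φ₂, hφ₂mono, hφ₂⟩ :=
    tendsto_subseq_of_bounded Metric.isBounded_closedBall hFmem
  set ψ : ℕ → ℕ := φ₁ ∘ φ₂ with hψdef
  have hψmono : StrictMono ψ := hφ₁mono.comp hφ₂mono
  set a : Fin m → ℝ := fun i => (c i).1 with hadef
  set b : Fin m → ℝ := fun i => (c i).2 with hbdef
  have hFψ : Tendsto (fun k => F (ψ k)) atTop (𝓝 c) := hφ₂
  have ha : ∀ i, Tendsto (fun k => ‖x i (ψ k)‖) atTop (𝓝 (a i)) := fun i =>
    (continuous_fst.tendsto _).comp (((continuous_apply i).tendsto _).comp hFψ)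
  have hb : ∀ i, Tendsto (fun k => ‖x i (ψ k) - y i‖) atTop (𝓝 (b i)) := fun i =>
    (continuous_snd.tendsto _).comp (((continuous_apply i).tendsto _).comp hFψ)
  have h0a : ∀ i, 0 ≤ a i := fun i =>
    ge_of_tendsto (ha i) (Eventually.of_forall fun k => norm_nonneg _)
  -- apply the Opial property componentwise
  have hab : ∀ i, a i ≤ b i := by
    intro i
    have hw : WeaklyNull fun k => x i (ψ k) := fun φ =>
      (hx i φ).comp hψmono.tendsto_atTop
    have h := hOp i _ hw (y i)
    rwa [(ha i).limsup_eq, (hb i).limsup_eq] at h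
  have hNab : N a ≤ N b := absN_mono hadd hhom habs a b h0a hab
  -- limits of g0, g1 along the subsequence
  have hNa : Tendsto (fun k => g0 (ψ k)) atTop (𝓝 (N a)) :=
    (hcont.tendsto a).comp (tendsto_pi_nhds.2 ha)
  have hNb : Tendsto (fun k => g1 (ψ k)) atTop (𝓝 (N b)) :=
    (hcont.tendsto b).comp (tendsto_pi_nhds.2 hb)
  -- L ≤ N a
  have hLNa : L ≤ N a := by
    have hle : ∀ k : ℕ, L - 1 / (k + 1) ≤ g0 (ψ k) := by
      intro k
      have h1 := hφ₁ (φ₂ k)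
      have h2 : (k : ℝ) + 1 ≤ (φ₂ k : ℝ) + 1 := by
        have h2' : k ≤ φ₂ k := hφ₂mono.le_apply
        exact_mod_cast by omega
      have h3 : 1 / ((φ₂ k : ℝ) + 1) ≤ 1 / ((k : ℝ) + 1) :=
        one_div_le_one_div_of_le (by positivity) h2
      have := h1.le
      simp only [hψdef, Function.comp_apply]
      linarith
    have htend : Tendsto (fun k : ℕ => L - 1 / (k + 1 : ℝ)) atTop (𝓝 (L - 0)) :=
      tendsto_const_nhds.sub tendsto_one_div_add_atTop_nhds_zero_nat
    rw [sub_zero] at htend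
    exact le_of_tendsto_of_tendsto' htend hNa hle
  -- N b ≤ limsup g1
  have hNbL : N b ≤ limsup g1 atTop := by
    have h1 : N b = limsup (g1 ∘ ψ) atTop := (hNb.limsup_eq).symm
    have h2 : limsup (g1 ∘ ψ) atTop = limsup g1 (map ψ atTop) :=
      (Filter.limsup_comp g1 ψ atTop).symm
    rw [h1, h2]
    refine limsup_le_limsup_of_le hψmono.tendsto_atTop ?_ ?_
    · exact isCoboundedUnder_le_of_le _ fun n => hN0 _
    · exact isBoundedUnder_of ⟨(m : ℝ) * R, hg1bdd⟩
  calc limsup g0 atTop = L := rfl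
    _ ≤ N a := hLNa
    _ ≤ N b := hNab
    _ ≤ limsup g1 atTop := hNbL
end
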